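/- Suppose (M, J) is a pair of differentiable functions on [0,T] solving the system: Ṁ = −[2A + |C|² + Γ⁽¹⁾ B'(R+MD'D)⁻¹(B+D'C)]M − Q + (B+D'C)'(R+MD'D)⁻¹(B+D'C)M² − B'(R+MD'D)⁻¹(B+D'C)M²/J with M(T)=G, and the corresponding equation for J with J(T)=G/h, and suppose M(s) > 0 and J(s) > 0 for all s. Then (M, N) with N := M/J solves the coupled Riccati system: Ṁ = −[2A+|C|²+Γ⁽¹⁾B'(R+MD'D)⁻¹(B+D'C)]M − Q + (B+D'C)'(R+MD'D)⁻¹(B+D'C)M² − B'(R+MD'D)⁻¹(B+D'C)MN with M(T)=G, and Ṅ = −[2A+Γ⁽¹⁾B'(R+MD'D)⁻¹B]N + B'(R+MD'D)⁻¹(B+D'C)MN − B'(R+MD'D)⁻¹B N² with N(T)=h, and N(s) > 0 for all s. -/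

import Mathlib

open Matrix

/-- `S(s) = R(s) + M(s)·D(s)ᵀD(s)`. -/
def Smat {l d : ℕ} (R : ℝ → Matrix (Fin l) (Fin l) ℝ) (M : ℝ → ℝ)
    (D : ℝ → Matrix (Fin d) (Fin l) ℝ) (s : ℝ) : Matrix (Fin l) (Fin l) ℝ :=
  R s + M s • ((D s)ᵀ * D s)

/-- Proposition 4.1: if `(M,J)` is a positive solution pair of the transformed system,
then `(M, N)` with `N = M/J` is a positive solution pair of the coupled Riccati system. -/
theorem MJ_system_to_MN_system
    {l d : ℕ} (T : ℝ) (hT : 0 < T)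
    (A Q Γ : ℝ → ℝ) (hA : Continuous A) (hQ : Continuous Q) (hΓ : Continuous Γ)
    (B : ℝ → Fin l → ℝ) (hB : Continuous B)
    (C : ℝ → Fin d → ℝ) (hC : Continuous C)
    (D : ℝ → Matrix (Fin d) (Fin l) ℝ) (hD : Continuous D)
    (R : ℝ → Matrix (Fin l) (Fin l) ℝ) (hR : Continuous R)
    (hRsymm : ∀ s, (R s)ᵀ = R s)
    (G h : ℝ) (hG : 0 < G) (hh : 0 < h)
    (M J : ℝ → ℝ)
    (hSinv : ∀ s, IsUnit (Smat R M D s))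
    (hMpos : ∀ s ∈ Set.Icc (0 : ℝ) T, 0 < M s)
    (hJpos : ∀ s ∈ Set.Icc (0 : ℝ) T, 0 < J s)
    (hMT : M T = G) (hJT : J T = G / h)
    (hMode : ∀ s ∈ Set.Icc (0 : ℝ) T, HasDerivAt M
      (-(2 * A s + (∑ i, C s i ^ 2)
          + Γ s * (B s ⬝ᵥ ((Smat R M D s)⁻¹ *ᵥ (B s + (D s)ᵀ *ᵥ C s)))) * M s
        - Q s
        + ((B s + (D s)ᵀ *ᵥ C s) ⬝ᵥ ((Smat R M D s)⁻¹ *ᵥ (B s + (D s)ᵀ *ᵥ C s))) * M s ^ 2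
        - (B s ⬝ᵥ ((Smat R M D s)⁻¹ *ᵥ (B s + (D s)ᵀ *ᵥ C s))) * M s ^ 2 / J s) s)
    (hJode : ∀ s ∈ Set.Icc (0 : ℝ) T, HasDerivAt J
      (-((∑ i, C s i ^ 2)
          - (((D s)ᵀ *ᵥ C s) ⬝ᵥ ((Smat R M D s)⁻¹ *ᵥ (B s + (D s)ᵀ *ᵥ C s))) * M s
          + Γ s * (B s ⬝ᵥ ((Smat R M D s)⁻¹ *ᵥ ((D s)ᵀ *ᵥ C s)))
          + Q s / M s) * J s
        - (B s ⬝ᵥ ((Smat R M D s)⁻¹ *ᵥ ((D s)ᵀ *ᵥ C s))) * M s) s) :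
    let N : ℝ → ℝ := fun s => M s / J s
    N T = h ∧
    (∀ s ∈ Set.Icc (0 : ℝ) T, 0 < N s) ∧
    (∀ s ∈ Set.Icc (0 : ℝ) T, HasDerivAt M
      (-(2 * A s + (∑ i, C s i ^ 2)
          + Γ s * (B s ⬝ᵥ ((Smat R M D s)⁻¹ *ᵥ (B s + (D s)ᵀ *ᵥ C s)))) * M s
        - Q s
        + ((B s + (D s)ᵀ *ᵥ C s) ⬝ᵥ ((Smat R M D s)⁻¹ *ᵥ (B s + (D s)ᵀ *ᵥ C s))) * M s ^ 2
        - (B s ⬝ᵥ ((Smat R M D s)⁻¹ *ᵥ (B s + (D s)ᵀ *ᵥ C s))) * M s * N s) s) ∧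
    (∀ s ∈ Set.Icc (0 : ℝ) T, HasDerivAt N
      (-(2 * A s + Γ s * (B s ⬝ᵥ ((Smat R M D s)⁻¹ *ᵥ B s))) * N s
        + (B s ⬝ᵥ ((Smat R M D s)⁻¹ *ᵥ (B s + (D s)ᵀ *ᵥ C s))) * M s * N s
        - (B s ⬝ᵥ ((Smat R M D s)⁻¹ *ᵥ B s)) * N s ^ 2) s) := by
  intro N
  have hN : ∀ s, N s = M s / J s := fun s => rfl
  refine ⟨?_, ?_, ?_, ?_⟩
  · simp only [hN, hMT, hJT]
    field_simp
  · intro s hs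
    exact div_pos (hMpos s hs) (hJpos s hs)
  · intro s hs
    have hJ := (hJpos s hs).ne'
    convert hMode s hs using 1
    simp only [hN]
    field_simp
  · intro s hs
    have hJ := (hJpos s hs).ne'
    have hM := (hMpos s hs).ne'
    have hd := (hMode s hs).div (hJode s hs) hJ
    refine (show HasDerivAt N _ s from hd).congr_deriv ?_
    simp only [hN, mulVec_add, dotProduct_add, add_dotProduct]
    field_simp
    ring
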